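/- Let c be a positive integer and let A be a real c×c matrix with nonpositive off-diagonal entries, zero row sums and zero column sums. Then for every γ : Fin c → ℝ, the equality γ ⬝ᵥ (A *ᵥ (fun i => Real.exp (γ i))) = 0 holds if and only if γ i = γ j for every pair of distinct indices i, j with A i j ≠ 0. -/
import Mathlib


open Matrix

theorem balanced_laplacian_dissipation_eq_zero_iff
    (c : ℕ) (hc : 0 < c) (A : Matrix (Fin c) (Fin c) ℝ)
    (hoff : ∀ i j, i ≠ j → A i j ≤ 0)
    (hrow : ∀ i, ∑ j, A i j = 0)
    (hcol : ∀ j, ∑ i, A i j = 0) :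
    ∀ γ : Fin c → ℝ,
      γ ⬝ᵥ (A *ᵥ (fun i => Real.exp (γ i))) = 0 ↔
        ∀ i j, i ≠ j → A i j ≠ 0 → γ i = γ j := by
  intro γ
  set f : Fin c → Fin c → ℝ := fun i j =>
    (-A i j) * (Real.exp (γ i) - Real.exp (γ j) - (γ i - γ j) * Real.exp (γ j)) with hf
  have h1 : ∑ i, ∑ j, A i j * Real.exp (γ i) = 0 := by
    refine Finset.sum_eq_zero fun i _ => ?_
    rw [← Finset.sum_mul, hrow, zero_mul]
  have h2 : ∑ i, ∑ j, A i j * Real.exp (γ j) = 0 := by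
    rw [Finset.sum_comm]
    refine Finset.sum_eq_zero fun j _ => ?_
    rw [← Finset.sum_mul, hcol, zero_mul]
  have h3 : ∑ i, ∑ j, A i j * (γ j * Real.exp (γ j)) = 0 := by
    rw [Finset.sum_comm]
    refine Finset.sum_eq_zero fun j _ => ?_
    rw [← Finset.sum_mul, hcol, zero_mul]
  have key : γ ⬝ᵥ (A *ᵥ (fun i => Real.exp (γ i))) = ∑ i, ∑ j, f i j := by
    have expand : ∀ i j, f i j =
        γ i * (A i j * Real.exp (γ j)) - A i j * Real.exp (γ i)
          + A i j * Real.exp (γ j) + A i j * (γ j * Real.exp (γ j))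
          - 2 * (A i j * (γ j * Real.exp (γ j))) := by
      intro i j; simp only [hf]; ring
    simp only [dotProduct, mulVec, Finset.mul_sum, expand,
      Finset.sum_sub_distrib, Finset.sum_add_distrib, ← Finset.mul_sum, h1, h2, h3]
    ring
  have hfnn : ∀ i j, 0 ≤ f i j := by
    intro i j
    rcases eq_or_ne i j with rfl | hij
    · simp [hf]
    · have hA : 0 ≤ -A i j := by linarith [hoff i j hij]
      refine mul_nonneg hA ?_
      have h := Real.add_one_le_exp (γ i - γ j)
      have heq : Real.exp (γ i) = Real.exp (γ i - γ j) * Real.exp (γ j) := by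
        rw [← Real.exp_add]; ring_nf
      nlinarith [Real.exp_pos (γ j)]
  constructor
  · intro h0 i j hij hAij
    rw [key] at h0
    have hterm : f i j = 0 := by
      have hall := (Finset.sum_eq_zero_iff_of_nonneg
        (fun i _ => Finset.sum_nonneg (fun j _ => hfnn i j))).mp h0 i (Finset.mem_univ i)
      exact (Finset.sum_eq_zero_iff_of_nonneg (fun j _ => hfnn i j)).mp hall
        j (Finset.mem_univ j)
    by_contra hne
    have hA : -A i j > 0 := by
      rcases lt_or_eq_of_le (hoff i j hij) with h | h
      · linarith
      · exact absurd h hAij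
    have hbr : 0 < Real.exp (γ i) - Real.exp (γ j) - (γ i - γ j) * Real.exp (γ j) := by
      have ht : γ i - γ j ≠ 0 := sub_ne_zero.mpr hne
      have h := Real.add_one_lt_exp ht
      have heq : Real.exp (γ i) = Real.exp (γ i - γ j) * Real.exp (γ j) := by
        rw [← Real.exp_add]; ring_nf
      nlinarith [Real.exp_pos (γ j)]
    have : 0 < f i j := mul_pos hA hbr
    linarith [hterm]
  · intro h
    rw [key]
    refine Finset.sum_eq_zero fun i _ => Finset.sum_eq_zero fun j _ => ?_
    rcases eq_or_ne i j with rfl | hij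
    · simp [hf]
    · rcases eq_or_ne (A i j) 0 with hA | hA
      · simp [hf, hA]
      · have := h i j hij hA
        simp [hf, this]
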